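/- If y is Negative Binomial(s, p)-distributed (number of failures before the s-th success), then v(t) = (s·t + t^2)/(s + 1) satisfies E[v(y)] = V[y]. -/

import Mathlib

open MeasureTheory ProbabilityTheory

lemma my_integrable {μ : Measure ℕ} [IsFiniteMeasure μ] {g : ℕ → ℝ}
    (h : Summable fun m ↦ ‖g m‖ * (μ {m}).toReal) : Integrable g μ := by
  refine ⟨(measurable_of_countable g).aestronglyMeasurable, ?_⟩
  rw [hasFiniteIntegral_iff_norm, lintegral_countable']
  have he : ∀ m : ℕ, ENNReal.ofReal ‖g m‖ * μ {m}
      = ENNReal.ofReal (‖g m‖ * (μ {m}).toReal) := fun m ↦ by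
    rw [ENNReal.ofReal_mul (norm_nonneg _), ENNReal.ofReal_toReal (measure_ne_top μ _)]
  simp_rw [he]
  rw [← ENNReal.ofReal_tsum_of_nonneg
    (fun m ↦ mul_nonneg (norm_nonneg _) ENNReal.toReal_nonneg) h]
  exact ENNReal.ofReal_lt_top

lemma nat_id1 (n k : ℕ) : (n+1) * (n+1+k).choose k = (k+1) * ((n+(k+1)).choose (k+1)) := by
  have h := Nat.choose_succ_right_eq (n+1+k) k
  have h1 : n+1+k-k = n+1 := by omega
  have h2 : n + (k+1) = n+1+k := by omega
  rw [h1] at h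
  rw [h2, Nat.mul_comm, ← h, Nat.mul_comm]

lemma nat_id2 (n k : ℕ) :
    ((n+2) * (n+1)) * (n+2+k).choose k = ((k+1) * (k+2)) * ((n+(k+2)).choose (k+2)) := by
  have h := Nat.choose_succ_right_eq (n+2+k) k
  have h' := Nat.choose_succ_right_eq (n+2+k) (k+1)
  have h1 : n+2+k-k = n+2 := by omega
  have h2 : n+2+k-(k+1) = n+1 := by omega
  have h3 : n + (k+2) = n+2+k := by omega
  rw [h1] at h; rw [h2] at h'
  rw [h3]
  calc ((n+2) * (n+1)) * (n+2+k).choose k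
      = (n+1) * ((n+2+k).choose k * (n+2)) := by ring
    _ = (n+1) * ((n+2+k).choose (k+1) * (k+1)) := by rw [h]
    _ = (k+1) * ((n+2+k).choose (k+1) * (n+1)) := by ring
    _ = (k+1) * ((n+2+k).choose (k+2) * (k+2)) := by rw [h']
    _ = ((k+1)*(k+2)) * (n+2+k).choose (k+2) := by ring

/-- For `y` negative binomially distributed (number of failures before the `s`-th success,
success probability... parametrized so that `P(y = m) = C(m+s-1, m) p^m (1-p)^s`),
the function `v(t) = (s t + t²)/(s + 1)` satisfies `E[v(y)] = V[y]`. -/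
theorem stmt3 (s : ℕ) (hs : 1 ≤ s) (p : ℝ) (hp0 : 0 < p) (hp1 : p < 1)
    (μ : Measure ℕ) [IsProbabilityMeasure μ]
    (hpmf : ∀ m : ℕ,
      μ {m} = ENNReal.ofReal (((m + s - 1).choose m : ℝ) * p ^ m * (1 - p) ^ s)) :
    (∫ m, ((s : ℝ) * (m : ℝ) + (m : ℝ) ^ 2) / ((s : ℝ) + 1) ∂μ)
      = variance (fun m : ℕ => (m : ℝ)) μ := by
  obtain ⟨k, rfl⟩ : ∃ k, s = k + 1 := ⟨s - 1, by omega⟩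
  set q : ℝ := 1 - p with hqdef
  have hq0 : 0 < q := by rw [hqdef]; linarith
  have hqne : q ≠ 0 := ne_of_gt hq0
  have hnorm : ‖p‖ < 1 := by rw [Real.norm_eq_abs, abs_of_pos hp0]; exact hp1
  have key : ∀ j : ℕ, HasSum (fun m : ℕ ↦ ((m + j).choose j : ℝ) * p ^ m) (1 / q ^ (j+1)) := by
    intro j
    rw [hqdef]
    exact hasSum_choose_mul_geometric_of_norm_lt_one j hnorm
  set f : ℕ → ℝ := fun m ↦ ((m + k).choose k : ℝ) * p ^ m * q ^ (k+1) with hfdef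
  have hf_nonneg : ∀ m, 0 ≤ f m := fun m ↦ by positivity
  have hmu : ∀ m, (μ {m}).toReal = f m := by
    intro m
    have hc : (m + (k+1) - 1).choose m = (m + k).choose k := by
      have h1 : m + (k+1) - 1 = m + k := by omega
      have h2 := Nat.choose_symm (Nat.le_add_left k m)
      rw [Nat.add_sub_cancel] at h2
      rw [h1, h2]
    rw [hpmf m, ENNReal.toReal_ofReal (by positivity), hc]
  -- first moment
  have h1 : HasSum (fun m : ℕ ↦ f m * m) (((k:ℝ)+1) * p / q) := by
    have A := (key (k+1)).mul_left (((k:ℝ)+1) * p * q^(k+1))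
    have hfun : (fun n : ℕ ↦ f (n+1) * ((n+1 : ℕ) : ℝ))
        = fun n ↦ (((k:ℝ)+1) * p * q^(k+1)) * (((n + (k+1)).choose (k+1) : ℝ) * p ^ n) := by
      funext n
      have hid : ((n:ℝ)+1) * ((n+1+k).choose k : ℝ)
          = ((k:ℝ)+1) * (((n+(k+1)).choose (k+1) : ℝ)) := by exact_mod_cast nat_id1 n k
      simp only [hfdef]
      push_cast
      linear_combination (q^(k+1) * p^(n+1)) * hid
    have B : HasSum (fun n : ℕ ↦ f (n+1) * ((n+1 : ℕ) : ℝ))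
        ((((k:ℝ)+1) * p * q^(k+1)) * (1 / q ^ (k+1+1))) := hfun ▸ A
    have C := (hasSum_nat_add_iff (f := fun m : ℕ ↦ f m * (m : ℝ)) 1).1 B
    have hval : (((k:ℝ)+1) * p * q^(k+1)) * (1 / q ^ (k+1+1))
        + ∑ i ∈ Finset.range 1, f i * (i : ℝ) = ((k:ℝ)+1) * p / q := by
      simp only [Finset.sum_range_one, Nat.cast_zero, mul_zero, add_zero]
      rw [pow_succ]
      field_simp
      ring
    rwa [hval] at C
  -- second factorial moment
  have h2 : HasSum (fun m : ℕ ↦ f m * m * ((m:ℝ) - 1))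
      ((((k:ℝ)+1) * ((k:ℝ)+2)) * p^2 / q^2) := by
    have A := (key (k+2)).mul_left ((((k:ℝ)+1) * ((k:ℝ)+2)) * p^2 * q^(k+1))
    have hfun : (fun n : ℕ ↦ f (n+2) * ((n+2 : ℕ) : ℝ) * (((n+2 : ℕ) : ℝ) - 1))
        = fun n ↦ ((((k:ℝ)+1) * ((k:ℝ)+2)) * p^2 * q^(k+1))
            * (((n + (k+2)).choose (k+2) : ℝ) * p ^ n) := by
      funext n
      have hid : (((n:ℝ)+2) * ((n:ℝ)+1)) * ((n+2+k).choose k : ℝ)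
          = (((k:ℝ)+1) * ((k:ℝ)+2)) * (((n+(k+2)).choose (k+2) : ℝ)) := by
        exact_mod_cast nat_id2 n k
      simp only [hfdef]
      push_cast
      linear_combination (q^(k+1) * p^(n+2)) * hid
    have B : HasSum (fun n : ℕ ↦ f (n+2) * ((n+2 : ℕ) : ℝ) * (((n+2 : ℕ) : ℝ) - 1))
        (((((k:ℝ)+1) * ((k:ℝ)+2)) * p^2 * q^(k+1)) * (1 / q ^ (k+2+1))) := hfun ▸ A
    have C := (hasSum_nat_add_iff (f := fun m : ℕ ↦ f m * (m : ℝ) * ((m:ℝ) - 1)) 2).1 B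
    have hval : ((((k:ℝ)+1) * ((k:ℝ)+2)) * p^2 * q^(k+1)) * (1 / q ^ (k+2+1))
        + ∑ i ∈ Finset.range 2, f i * (i : ℝ) * ((i:ℝ) - 1)
        = (((k:ℝ)+1) * ((k:ℝ)+2)) * p^2 / q^2 := by
      rw [Finset.sum_range_succ, Finset.sum_range_one]
      have hpow : q ^ (k+2+1) = q^(k+1) * q^2 := by rw [← pow_add]
      rw [hpow]
      simp only [Nat.cast_zero, Nat.cast_one, mul_zero, zero_mul, sub_self, mul_one, add_zero]
      field_simp
    rwa [hval] at C
  -- second moment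
  have h2' : HasSum (fun m : ℕ ↦ f m * (m:ℝ)^2)
      ((((k:ℝ)+1) * ((k:ℝ)+2)) * p^2 / q^2 + ((k:ℝ)+1) * p / q) := by
    refine HasSum.congr_fun (h2.add h1) fun m ↦ by ring
  -- integrability
  have sum1 : Summable fun m : ℕ ↦ ‖(m:ℝ)‖ * (μ {m}).toReal := by
    refine h1.summable.congr fun m ↦ ?_
    rw [hmu, Real.norm_eq_abs, abs_of_nonneg (Nat.cast_nonneg m), mul_comm]
  have sum2 : Summable fun m : ℕ ↦ ‖(m:ℝ)^2‖ * (μ {m}).toReal := by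
    refine h2'.summable.congr fun m ↦ ?_
    rw [hmu, Real.norm_eq_abs, abs_of_nonneg (by positivity), mul_comm]
  have ig1 : Integrable (fun m : ℕ ↦ (m:ℝ)) μ := my_integrable sum1
  have ig2 : Integrable (fun m : ℕ ↦ (m:ℝ)^2) μ := my_integrable sum2
  have igv : Integrable (fun m : ℕ ↦ (((k:ℝ)+1) * m + (m:ℝ)^2) / ((k:ℝ)+1+1)) μ :=
    ((ig1.const_mul ((k:ℝ)+1)).add ig2).div_const _
  -- integral values
  have I1 : ∫ m, (m:ℝ) ∂μ = ((k:ℝ)+1) * p / q := by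
    rw [integral_countable' ig1,
      tsum_congr (fun m : ℕ ↦ by rw [smul_eq_mul, measureReal_def, hmu] :
        ∀ m : ℕ, μ.real {m} • (m:ℝ) = f m * m), h1.tsum_eq]
  have I2 : ∫ m, (m:ℝ)^2 ∂μ
      = (((k:ℝ)+1) * ((k:ℝ)+2)) * p^2 / q^2 + ((k:ℝ)+1) * p / q := by
    rw [integral_countable' ig2,
      tsum_congr (fun m : ℕ ↦ by rw [smul_eq_mul, measureReal_def, hmu] :
        ∀ m : ℕ, μ.real {m} • ((m:ℝ)^2) = f m * (m:ℝ)^2), h2'.tsum_eq]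
  -- variance
  have mem2 : MemLp (fun m : ℕ ↦ (m:ℝ)) 2 μ := by
    rw [memLp_two_iff_integrable_sq ((measurable_of_countable _).aestronglyMeasurable)]
    exact ig2
  have hvar : variance (fun m : ℕ ↦ (m:ℝ)) μ
      = ((((k:ℝ)+1) * ((k:ℝ)+2)) * p^2 / q^2 + ((k:ℝ)+1) * p / q)
        - (((k:ℝ)+1) * p / q)^2 := by
    rw [variance_eq_sub mem2]
    have hsq : (fun m : ℕ ↦ (m:ℝ)) ^ 2 = fun m : ℕ ↦ (m:ℝ)^2 := by
      funext m; simp [pow_two]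
    rw [hsq, I2, I1]
  -- LHS
  have hL : (∫ m, (((k+1 : ℕ):ℝ) * (m : ℝ) + (m : ℝ) ^ 2) / (((k+1 : ℕ) : ℝ) + 1) ∂μ)
      = (((k:ℝ)+1) * (((k:ℝ)+1) * p / q)
          + ((((k:ℝ)+1) * ((k:ℝ)+2)) * p^2 / q^2 + ((k:ℝ)+1) * p / q)) / (((k:ℝ)+1)+1) := by
    have hcast : ∀ m : ℕ, (((k+1 : ℕ):ℝ) * (m : ℝ) + (m : ℝ) ^ 2) / (((k+1 : ℕ) : ℝ) + 1)
        = (((k:ℝ)+1) * (m : ℝ) + (m : ℝ) ^ 2) / (((k:ℝ)+1) + 1) := by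
      intro m; push_cast; ring_nf
    simp_rw [hcast]
    rw [integral_countable' igv]
    have hs : HasSum (fun m : ℕ ↦ f m * ((((k:ℝ)+1) * (m : ℝ) + (m : ℝ) ^ 2) / (((k:ℝ)+1) + 1)))
        ((((k:ℝ)+1) * (((k:ℝ)+1) * p / q)
          + ((((k:ℝ)+1) * ((k:ℝ)+2)) * p^2 / q^2 + ((k:ℝ)+1) * p / q)) / (((k:ℝ)+1)+1)) := by
      refine HasSum.congr_fun (((h1.mul_left (((k:ℝ)+1))).add h2').div_const (((k:ℝ)+1)+1))
        fun m ↦ by ring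
    rw [tsum_congr (fun m : ℕ ↦ by rw [smul_eq_mul, measureReal_def, hmu] :
      ∀ m : ℕ, μ.real {m} • ((((k:ℝ)+1) * (m : ℝ) + (m : ℝ) ^ 2) / (((k:ℝ)+1) + 1))
        = f m * ((((k:ℝ)+1) * (m : ℝ) + (m : ℝ) ^ 2) / (((k:ℝ)+1) + 1))), hs.tsum_eq]
  rw [hL, hvar]
  field_simp
  ring
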